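/- For every integer n ≥ 3 there exists a real n×2 matrix A with orthonormal columns (AᵀA = I₂) such that every 2×2 submatrix A_{ij} formed by two distinct rows of A satisfies σ₂(A_{ij}) ≤ 1/√n, i.e., every invertible 2×2 submatrix has spectral norm of its inverse at least √n; hence the bound √n in the submatrix-inverse theorem is tight. -/

import Mathlib

open Matrix Finset

/-- Euclidean norm on ℝ². -/
noncomputable def enorm2 (v : Fin 2 → ℝ) : ℝ := Real.sqrt (v 0 ^ 2 + v 1 ^ 2)

/-- Euclidean inner product on ℝ². -/
def inner2 (u v : Fin 2 → ℝ) : ℝ := u 0 * v 0 + u 1 * v 1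

/-- The square of a vector in ℝ², defined as for complex numbers:
`(ξ, η) ↦ (ξ² − η², 2ξη)`. -/
def vsq (v : Fin 2 → ℝ) : Fin 2 → ℝ := ![v 0 ^ 2 - v 1 ^ 2, 2 * v 0 * v 1]

/-- The largest singular value of a 2×2 real matrix (explicit closed form:
the singular values squared are the eigenvalues of `BᵀB`, which has trace
`tr(BᵀB)` and determinant `det(B)²`). -/
noncomputable def sigma1 (B : Matrix (Fin 2) (Fin 2) ℝ) : ℝ :=
  Real.sqrt (((Bᵀ * B).trace + Real.sqrt ((Bᵀ * B).trace ^ 2 - 4 * B.det ^ 2)) / 2)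

/-- The smallest singular value of a 2×2 real matrix. -/
noncomputable def sigma2 (B : Matrix (Fin 2) (Fin 2) ℝ) : ℝ :=
  Real.sqrt (((Bᵀ * B).trace - Real.sqrt ((Bᵀ * B).trace ^ 2 - 4 * B.det ^ 2)) / 2)

/-- The 2×2 submatrix of an n×2 matrix formed by rows `i` and `j`. -/
def rowPair {n : ℕ} (A : Matrix (Fin n) (Fin 2) ℝ) (i j : Fin n) :
    Matrix (Fin 2) (Fin 2) ℝ :=
  !![A i 0, A i 1; A j 0, A j 1]

/-- The bound `√n` is tight: for every `n ≥ 3` there is a matrix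
with orthonormal columns all of whose 2×2 submatrices have smallest singular
value at most `1/√n`. -/
lemma key_ineq (N T D : ℝ) (hN : 0 < N) (h : N^2 * D^2 ≤ N*T - 1) :
    Real.sqrt ((T - Real.sqrt (T^2 - 4*D^2))/2) ≤ 1/Real.sqrt N := by
  have hne : N ≠ 0 := hN.ne'
  rw [one_div, ← Real.sqrt_inv]
  apply Real.sqrt_le_sqrt
  have h2 : T - 2/N ≤ Real.sqrt (T^2 - 4*D^2) := by
    rcases le_or_gt (T - 2/N) 0 with h' | h'
    · exact h'.trans (Real.sqrt_nonneg _)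
    · have hsq : (T - 2/N)^2 ≤ T^2 - 4*D^2 := by
        rw [show T - 2/N = (T*N - 2)/N by field_simp, div_pow,
          div_le_iff₀ (by positivity : (0:ℝ) < N^2)]
        nlinarith [h]
      calc T - 2/N = Real.sqrt ((T - 2/N)^2) := (Real.sqrt_sq h'.le).symm
        _ ≤ _ := Real.sqrt_le_sqrt hsq
  have hd : (2:ℝ)/N = 2 * N⁻¹ := by ring
  rw [hd] at h2
  linarith

lemma sigma2_le (N p q r s : ℝ) (hN : 0 < N)
    (h : N^2 * (p*s - q*r)^2 ≤ N*(p^2+q^2+r^2+s^2) - 1) :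
    sigma2 !![p,q;r,s] ≤ 1/Real.sqrt N := by
  have htr : ((!![p,q;r,s])ᵀ * !![p,q;r,s]).trace = p^2+q^2+r^2+s^2 := by
    rw [Matrix.trace_fin_two]
    simp [Matrix.mul_apply, Fin.sum_univ_two, Matrix.transpose_apply, Matrix.vecHead,
      Matrix.vecTail]
    ring
  have hdet : (!![p,q;r,s]).det = p*s - q*r := by rw [Matrix.det_fin_two_of]
  unfold sigma2
  rw [htr, hdet]
  exact key_ineq N _ _ hN h

set_option maxHeartbeats 1000000 in
theorem submatrix_inverse_bound_tight (n : ℕ) (hn : 3 ≤ n) :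
    ∃ A : Matrix (Fin n) (Fin 2) ℝ, Aᵀ * A = 1 ∧
      ∀ i j : Fin n, i ≠ j → sigma2 (rowPair A i j) ≤ 1 / Real.sqrt n := by
  obtain ⟨m, rfl⟩ : ∃ m, n = m + 3 := ⟨n - 3, by omega⟩
  set M : ℝ := (m : ℝ) with hM
  have hM0 : 0 ≤ M := Nat.cast_nonneg m
  have h1ne : M + 1 ≠ 0 := by positivity
  have h3ne : M + 3 ≠ 0 := by positivity
  set aa : ℝ := Real.sqrt ((M+2)/((M+3)*(M+1))) with haa
  set bb : ℝ := Real.sqrt (1/(2*(M+3))) with hbb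
  set cc : ℝ := Real.sqrt (1/2) with hcc
  have ha2 : aa^2 = (M+2)/((M+3)*(M+1)) := Real.sq_sqrt (by positivity)
  have hb2 : bb^2 = 1/(2*(M+3)) := Real.sq_sqrt (by positivity)
  have hc2 : cc^2 = 1/2 := Real.sq_sqrt (by positivity)
  have hcast : ((m+3:ℕ):ℝ) = M + 3 := by push_cast; ring
  have hNpos : (0:ℝ) < M + 3 := by positivity
  refine ⟨fun i => ![if (i:ℕ) < m+1 then aa else bb,
      if (i:ℕ) < m+1 then 0 else if (i:ℕ) = m+1 then cc else -cc], ?_, ?_⟩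
  · -- orthonormality
    have hsplit : ∀ f : ℕ → ℝ, ∑ j : Fin (m+3), f (j:ℕ)
        = (∑ k ∈ Finset.range (m+1), f k) + f (m+1) + f (m+2) := by
      intro f
      rw [Fin.sum_univ_eq_sum_range]
      rw [show m+3 = (m+2)+1 from rfl, Finset.sum_range_succ,
        show m+2 = (m+1)+1 from rfl, Finset.sum_range_succ]
    ext p q
    erw [Matrix.mul_apply]
    fin_cases p <;> fin_cases q <;>
      simp only [Matrix.transpose_apply, Matrix.cons_val_zero, Matrix.cons_val_one,
        Matrix.head_cons, Fin.mk_zero, Fin.mk_one, Fin.isValue, Matrix.transpose, Matrix.of_apply]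
    · rw [hsplit (fun k => (if k < m+1 then aa else bb) * (if k < m+1 then aa else bb))]
      have e : (∑ k ∈ Finset.range (m+1),
          ((if k < m+1 then aa else bb) * (if k < m+1 then aa else bb)))
          = ∑ k ∈ Finset.range (m+1), aa*aa :=
        Finset.sum_congr rfl (fun k hk => by simp [Finset.mem_range.mp hk])
      rw [e, Finset.sum_const, Finset.card_range, if_neg (by omega : ¬ (m+1 < m+1)),
        if_neg (by omega : ¬ (m+2 < m+1)), nsmul_eq_mul, Matrix.one_apply_eq]
      push_cast
      rw [show aa*aa = aa^2 by ring, show bb*bb = bb^2 by ring, ha2, hb2]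
      field_simp
      ring
    · rw [hsplit (fun k => (if k < m+1 then aa else bb) *
        (if k < m+1 then 0 else if k = m+1 then cc else -cc))]
      have e : (∑ k ∈ Finset.range (m+1),
          ((if k < m+1 then aa else bb) * (if k < m+1 then 0 else if k = m+1 then cc else -cc)))
          = ∑ k ∈ Finset.range (m+1), (0:ℝ) :=
        Finset.sum_congr rfl (fun k hk => by simp [Finset.mem_range.mp hk])
      rw [e, Finset.sum_const, if_neg (by omega : ¬ (m+1 < m+1)),
        if_neg (by omega : ¬ (m+1 < m+1)),
        if_pos rfl, if_neg (by omega : ¬ (m+2 < m+1)), if_neg (by omega : ¬ (m+2 < m+1)),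
        if_neg (by omega : ¬ (m+2 = m+1))]
      rw [Matrix.one_apply_ne (by decide)]
      simp
    · rw [hsplit (fun k => (if k < m+1 then 0 else if k = m+1 then cc else -cc) *
        (if k < m+1 then aa else bb))]
      have e : (∑ k ∈ Finset.range (m+1),
          ((if k < m+1 then 0 else if k = m+1 then cc else -cc) * (if k < m+1 then aa else bb)))
          = ∑ k ∈ Finset.range (m+1), (0:ℝ) :=
        Finset.sum_congr rfl (fun k hk => by simp [Finset.mem_range.mp hk])
      rw [e, Finset.sum_const, if_neg (by omega : ¬ (m+1 < m+1)),
        if_neg (by omega : ¬ (m+1 < m+1)),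
        if_pos rfl, if_neg (by omega : ¬ (m+2 < m+1)), if_neg (by omega : ¬ (m+2 < m+1)),
        if_neg (by omega : ¬ (m+2 = m+1))]
      rw [Matrix.one_apply_ne (by decide)]
      simp
    · rw [hsplit (fun k => (if k < m+1 then 0 else if k = m+1 then cc else -cc) *
        (if k < m+1 then 0 else if k = m+1 then cc else -cc))]
      have e : (∑ k ∈ Finset.range (m+1),
          ((if k < m+1 then 0 else if k = m+1 then cc else -cc) *
            (if k < m+1 then 0 else if k = m+1 then cc else -cc)))
          = ∑ k ∈ Finset.range (m+1), (0:ℝ) :=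
        Finset.sum_congr rfl (fun k hk => by simp [Finset.mem_range.mp hk])
      rw [e, Finset.sum_const, if_neg (by omega : ¬ (m+1 < m+1)), if_pos rfl,
        if_neg (by omega : ¬ (m+2 < m+1)), if_neg (by omega : ¬ (m+2 = m+1)),
        Matrix.one_apply_eq]
      simp only [smul_zero, zero_add, neg_mul_neg]
      nlinarith [hc2]
  · -- the singular value bound
    intro i j hij
    have hij' : (i:ℕ) ≠ (j:ℕ) := fun h => hij (Fin.ext h)
    have hi3 : (i:ℕ) < m+3 := i.isLt
    have hj3 : (j:ℕ) < m+3 := j.isLt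
    rw [hcast]
    unfold rowPair
    simp only [Matrix.cons_val_zero, Matrix.cons_val_one, Matrix.head_cons]
    have hi : (i:ℕ) < m+1 ∨ (i:ℕ) = m+1 ∨ (i:ℕ) = m+2 := by omega
    have hj : (j:ℕ) < m+1 ∨ (j:ℕ) = m+1 ∨ (j:ℕ) = m+2 := by omega
    rcases hi with hi | hi | hi <;> rcases hj with hj | hj | hj
    · -- top top
      rw [if_pos hi, if_pos hi, if_pos hj, if_pos hj]
      apply sigma2_le _ _ _ _ _ hNpos
      have L : (M+3)^2*(aa*0 - 0*aa)^2 = 0 := by ring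
      have R : (M+3)*(aa^2+0^2+aa^2+0^2) - 1 = (M+3)/(M+1) := by
        rw [ha2]; field_simp; ring
      rw [L, R]
      positivity
    · -- top, m+1
      rw [if_pos hi, if_pos hi, if_neg (by omega : ¬ ((j:ℕ) < m+1)),
        if_neg (by omega : ¬ ((j:ℕ) < m+1)), if_pos hj]
      apply sigma2_le _ _ _ _ _ hNpos
      have L : (M+3)^2*(aa*cc - 0*bb)^2 = (M+3)*(M+2)/(2*(M+1)) := by
        rw [show (aa*cc - 0*bb)^2 = aa^2*cc^2 by ring, ha2, hc2]; field_simp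
      have R : (M+3)*(aa^2+0^2+bb^2+cc^2) - 1 = (M+3)*(M+2)/(2*(M+1)) := by
        rw [ha2, hb2, hc2]; field_simp; ring
      rw [L, R]
    · -- top, m+2
      rw [if_pos hi, if_pos hi, if_neg (by omega : ¬ ((j:ℕ) < m+1)),
        if_neg (by omega : ¬ ((j:ℕ) < m+1)), if_neg (by omega : ¬ ((j:ℕ) = m+1))]
      apply sigma2_le _ _ _ _ _ hNpos
      have L : (M+3)^2*(aa*(-cc) - 0*bb)^2 = (M+3)*(M+2)/(2*(M+1)) := by
        rw [show (aa*(-cc) - 0*bb)^2 = aa^2*cc^2 by ring, ha2, hc2]; field_simp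
      have R : (M+3)*(aa^2+0^2+bb^2+(-cc)^2) - 1 = (M+3)*(M+2)/(2*(M+1)) := by
        rw [show (-cc)^2 = cc^2 by ring, ha2, hb2, hc2]; field_simp; ring
      rw [L, R]
    · -- m+1, top
      rw [if_neg (by omega : ¬ ((i:ℕ) < m+1)), if_neg (by omega : ¬ ((i:ℕ) < m+1)),
        if_pos hi, if_pos hj, if_pos hj]
      apply sigma2_le _ _ _ _ _ hNpos
      have L : (M+3)^2*(bb*0 - cc*aa)^2 = (M+3)*(M+2)/(2*(M+1)) := by
        rw [show (bb*0 - cc*aa)^2 = aa^2*cc^2 by ring, ha2, hc2]; field_simp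
      have R : (M+3)*(bb^2+cc^2+aa^2+0^2) - 1 = (M+3)*(M+2)/(2*(M+1)) := by
        rw [ha2, hb2, hc2]; field_simp; ring
      rw [L, R]
    · omega
    · -- m+1, m+2
      rw [if_neg (by omega : ¬ ((i:ℕ) < m+1)), if_neg (by omega : ¬ ((i:ℕ) < m+1)),
        if_pos hi, if_neg (by omega : ¬ ((j:ℕ) < m+1)),
        if_neg (by omega : ¬ ((j:ℕ) < m+1)), if_neg (by omega : ¬ ((j:ℕ) = m+1))]
      apply sigma2_le _ _ _ _ _ hNpos
      have L : (M+3)^2*(bb*(-cc) - cc*bb)^2 = M+3 := by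
        rw [show (bb*(-cc) - cc*bb)^2 = 4*(bb^2*cc^2) by ring, hb2, hc2]; field_simp; ring
      have R : (M+3)*(bb^2+cc^2+bb^2+(-cc)^2) - 1 = M+3 := by
        rw [show (-cc)^2 = cc^2 by ring, hb2, hc2]; field_simp; ring
      rw [L, R]
    · -- m+2, top
      rw [if_neg (by omega : ¬ ((i:ℕ) < m+1)), if_neg (by omega : ¬ ((i:ℕ) < m+1)),
        if_neg (by omega : ¬ ((i:ℕ) = m+1)), if_pos hj, if_pos hj]
      apply sigma2_le _ _ _ _ _ hNpos
      have L : (M+3)^2*(bb*0 - (-cc)*aa)^2 = (M+3)*(M+2)/(2*(M+1)) := by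
        rw [show (bb*0 - (-cc)*aa)^2 = aa^2*cc^2 by ring, ha2, hc2]; field_simp
      have R : (M+3)*(bb^2+(-cc)^2+aa^2+0^2) - 1 = (M+3)*(M+2)/(2*(M+1)) := by
        rw [show (-cc)^2 = cc^2 by ring, ha2, hb2, hc2]; field_simp; ring
      rw [L, R]
    · -- m+2, m+1
      rw [if_neg (by omega : ¬ ((i:ℕ) < m+1)), if_neg (by omega : ¬ ((i:ℕ) < m+1)),
        if_neg (by omega : ¬ ((i:ℕ) = m+1)), if_neg (by omega : ¬ ((j:ℕ) < m+1)),
        if_neg (by omega : ¬ ((j:ℕ) < m+1)), if_pos hj]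
      apply sigma2_le _ _ _ _ _ hNpos
      have L : (M+3)^2*(bb*cc - (-cc)*bb)^2 = M+3 := by
        rw [show (bb*cc - (-cc)*bb)^2 = 4*(bb^2*cc^2) by ring, hb2, hc2]; field_simp; ring
      have R : (M+3)*(bb^2+(-cc)^2+bb^2+cc^2) - 1 = M+3 := by
        rw [show (-cc)^2 = cc^2 by ring, hb2, hc2]; field_simp; ring
      rw [L, R]
    · omega
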